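/- For two kernels P, P' with max one-step total variation distance δ₁, any policy π, discount γ∈[0,1), and rewards bounded by r_max, the value functions at any state s_t (appearing at time t) satisfy |V^{P',π}(s_t) - V^{P,π}(s_t)| ≤ min( 2 r_max δ₁ (tγ(1-γ)+1)/(1-γ)², 2 r_max/(1-γ) ). -/

import Mathlib

open scoped BigOperators

variable {S A : Type*}

/-- `P` is a transition kernel: for each state-action pair, a probability
distribution over next states. -/
def IsKernel [Fintype S] (P : S → A → S → ℝ) : Prop :=
  ∀ s a, (∀ s', 0 ≤ P s a s') ∧ ∑ s', P s a s' = 1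

/-- `π` is a stochastic policy: for each state, a probability distribution over actions. -/
def IsPolicy [Fintype A] (π : S → A → ℝ) : Prop :=
  ∀ s, (∀ a, 0 ≤ π s a) ∧ ∑ a, π s a = 1

/-- `ρ` is a probability distribution over states. -/
def IsDist [Fintype S] (ρ : S → ℝ) : Prop :=
  (∀ s, 0 ≤ ρ s) ∧ ∑ s, ρ s = 1

/-- One step of the state-marginal evolution under kernel `P` and policy `π`. -/
noncomputable def stepMarginal [Fintype S] [Fintype A]
    (P : S → A → S → ℝ) (π : S → A → ℝ) (μ : S → ℝ) : S → ℝ :=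
  fun s' => ∑ s, μ s * ∑ a, π s a * P s a s'

/-- The time-`t` state marginal under kernel `P`, policy `π`, initial distribution `ρ`. -/
noncomputable def marginal [Fintype S] [Fintype A]
    (P : S → A → S → ℝ) (π : S → A → ℝ) (ρ : S → ℝ) : ℕ → S → ℝ
  | 0 => ρ
  | t + 1 => stepMarginal P π (marginal P π ρ t)

/-- Expected one-step reward when the current state is distributed according to `μ`. -/
noncomputable def expReward [Fintype S] [Fintype A]
    (P : S → A → S → ℝ) (π : S → A → ℝ) (r : S → A → S → ℝ) (μ : S → ℝ) : ℝ :=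
  ∑ s, μ s * ∑ a, π s a * ∑ s', P s a s' * r s a s'

/-- The expected discounted return `J(P, π)` with initial distribution `ρ`. -/
noncomputable def Jret [Fintype S] [Fintype A]
    (P : S → A → S → ℝ) (π : S → A → ℝ) (r : S → A → S → ℝ) (γ : ℝ) (ρ : S → ℝ) : ℝ :=
  ∑' t : ℕ, γ ^ t * expReward P π r (marginal P π ρ t)

/-- The value function `V^{P,π}(s)`: the return starting from state `s`. -/
noncomputable def Vval [Fintype S] [Fintype A] [DecidableEq S]
    (P : S → A → S → ℝ) (π : S → A → ℝ) (r : S → A → S → ℝ) (γ : ℝ) (s : S) : ℝ :=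
  Jret P π r γ (fun s' => if s' = s then 1 else 0)

/-- The state-action value function `Q^{P,π}(s,a)`. -/
noncomputable def Qval [Fintype S] [Fintype A] [DecidableEq S]
    (P : S → A → S → ℝ) (π : S → A → ℝ) (r : S → A → S → ℝ) (γ : ℝ) (s : S) (a : A) : ℝ :=
  ∑ s', P s a s' * (r s a s' + γ * Vval P π r γ s')

/-- The advantage function `A^{P,π}(s,a) = Q^{P,π}(s,a) - V^{P,π}(s)`. -/
noncomputable def Aval [Fintype S] [Fintype A] [DecidableEq S]
    (P : S → A → S → ℝ) (π : S → A → ℝ) (r : S → A → S → ℝ) (γ : ℝ) (s : S) (a : A) : ℝ :=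
  Qval P π r γ s a - Vval P π r γ s

section aux
variable [Fintype S] [Fintype A]

lemma row_sum_one (P : S → A → S → ℝ) (π : S → A → ℝ)
    (hP : IsKernel P) (hπ : IsPolicy π) (s : S) :
    ∑ s', ∑ a, π s a * P s a s' = 1 := by
  rw [Finset.sum_comm]
  calc ∑ a, ∑ s', π s a * P s a s'
      = ∑ a, π s a * ∑ s', P s a s' := by simp_rw [Finset.mul_sum]
    _ = ∑ a, π s a := Finset.sum_congr rfl fun a _ => by rw [(hP s a).2, mul_one]
    _ = 1 := (hπ s).2

lemma row_diff (P P' : S → A → S → ℝ) (π : S → A → ℝ) (δ₁ : ℝ)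
    (hπ : IsPolicy π)
    (hδ : ∀ s a, (1 / 2) * ∑ s', |P' s a s' - P s a s'| ≤ δ₁) (s : S) :
    ∑ s', |∑ a, π s a * P' s a s' - ∑ a, π s a * P s a s'| ≤ 2 * δ₁ := by
  calc ∑ s', |∑ a, π s a * P' s a s' - ∑ a, π s a * P s a s'|
      = ∑ s', |∑ a, π s a * (P' s a s' - P s a s')| := by
        simp_rw [mul_sub, Finset.sum_sub_distrib]
    _ ≤ ∑ s', ∑ a, |π s a * (P' s a s' - P s a s')| :=
        Finset.sum_le_sum fun s' _ => Finset.abs_sum_le_sum_abs _ _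
    _ = ∑ a, π s a * ∑ s', |P' s a s' - P s a s'| := by
        rw [Finset.sum_comm]
        exact Finset.sum_congr rfl fun a _ => by
          rw [Finset.mul_sum]
          exact Finset.sum_congr rfl fun s' _ => by
            rw [abs_mul, abs_of_nonneg ((hπ s).1 a)]
    _ ≤ ∑ a, π s a * (2 * δ₁) := Finset.sum_le_sum fun a _ =>
        mul_le_mul_of_nonneg_left (by linarith [hδ s a]) ((hπ s).1 a)
    _ = 2 * δ₁ := by rw [← Finset.sum_mul, (hπ s).2, one_mul]

lemma marginal_isDist (P : S → A → S → ℝ) (π : S → A → ℝ) (ρ : S → ℝ)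
    (hP : IsKernel P) (hπ : IsPolicy π) (hρ : IsDist ρ) (t : ℕ) :
    IsDist (marginal P π ρ t) := by
  induction t with
  | zero => exact hρ
  | succ t ih =>
    constructor
    · intro s'
      apply Finset.sum_nonneg
      intro s _
      exact mul_nonneg (ih.1 s) (Finset.sum_nonneg fun a _ =>
        mul_nonneg ((hπ s).1 a) ((hP s a).1 s'))
    · show ∑ s', ∑ s, marginal P π ρ t s * ∑ a, π s a * P s a s' = 1
      rw [Finset.sum_comm]
      calc ∑ s, ∑ s', marginal P π ρ t s * ∑ a, π s a * P s a s'
          = ∑ s, marginal P π ρ t s * ∑ s', ∑ a, π s a * P s a s' := by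
            simp_rw [Finset.mul_sum]
        _ = ∑ s, marginal P π ρ t s := Finset.sum_congr rfl fun s _ => by
            rw [row_sum_one P π hP hπ s, mul_one]
        _ = 1 := ih.2

lemma tv_marginal (P P' : S → A → S → ℝ) (π : S → A → ℝ) (ρ : S → ℝ) (δ₁ : ℝ)
    (hP : IsKernel P) (hP' : IsKernel P') (hπ : IsPolicy π) (hρ : IsDist ρ)
    (hδ : ∀ s a, (1 / 2) * ∑ s', |P' s a s' - P s a s'| ≤ δ₁) (t : ℕ) :
    ∑ s, |marginal P' π ρ t s - marginal P π ρ t s| ≤ 2 * t * δ₁ := by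
  induction t with
  | zero => simp [marginal]
  | succ t ih =>
    set μ := marginal P π ρ t with hμdef
    set μ' := marginal P' π ρ t with hμ'def
    have hμd : IsDist μ := marginal_isDist P π ρ hP hπ hρ t
    have key : ∀ s', marginal P' π ρ (t+1) s' - marginal P π ρ (t+1) s'
        = ∑ s, ((μ' s - μ s) * (∑ a, π s a * P' s a s')
            + μ s * ((∑ a, π s a * P' s a s') - (∑ a, π s a * P s a s'))) := by
      intro s'
      show stepMarginal P' π μ' s' - stepMarginal P π μ s' = _
      rw [stepMarginal, stepMarginal, ← Finset.sum_sub_distrib]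
      exact Finset.sum_congr rfl fun s _ => by ring
    calc ∑ s', |marginal P' π ρ (t+1) s' - marginal P π ρ (t+1) s'|
        ≤ ∑ s', ∑ s, (|μ' s - μ s| * (∑ a, π s a * P' s a s')
            + μ s * |(∑ a, π s a * P' s a s') - (∑ a, π s a * P s a s')|) := by
          apply Finset.sum_le_sum
          intro s' _
          rw [key s']
          refine le_trans (Finset.abs_sum_le_sum_abs _ _) (Finset.sum_le_sum ?_)
          intro s _
          refine le_trans (abs_add_le _ _) ?_
          rw [abs_mul, abs_mul, abs_of_nonneg (hμd.1 s),
            abs_of_nonneg (Finset.sum_nonneg fun a _ =>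
              mul_nonneg ((hπ s).1 a) ((hP' s a).1 s'))]
      _ = ∑ s, (|μ' s - μ s| * ∑ s', (∑ a, π s a * P' s a s')
            + μ s * ∑ s', |(∑ a, π s a * P' s a s') - (∑ a, π s a * P s a s')|) := by
          rw [Finset.sum_comm]
          exact Finset.sum_congr rfl fun s _ => by
            rw [Finset.sum_add_distrib, Finset.mul_sum, Finset.mul_sum]
      _ ≤ ∑ s, (|μ' s - μ s| * 1 + μ s * (2 * δ₁)) := by
          apply Finset.sum_le_sum
          intro s _
          refine add_le_add ?_ ?_
          · exact mul_le_mul_of_nonneg_left (le_of_eq (row_sum_one P' π hP' hπ s))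
              (abs_nonneg _)
          · exact mul_le_mul_of_nonneg_left (row_diff P P' π δ₁ hπ hδ s) (hμd.1 s)
      _ = (∑ s, |μ' s - μ s|) + 2 * δ₁ := by
          rw [Finset.sum_add_distrib]
          simp_rw [mul_one]
          rw [← Finset.sum_mul, hμd.2, one_mul]
      _ ≤ 2 * (t+1 : ℕ) * δ₁ := by
          push_cast
          linarith

end aux

section aux2
variable [Fintype S] [Fintype A]

lemma abs_g_le (P : S → A → S → ℝ) (π : S → A → ℝ) (r : S → A → S → ℝ) (rmax : ℝ)
    (hP : IsKernel P) (hπ : IsPolicy π) (hr : ∀ s a s', |r s a s'| ≤ rmax) (s : S) :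
    |∑ a, π s a * ∑ s', P s a s' * r s a s'| ≤ rmax := by
  have hain : ∀ a, |∑ s', P s a s' * r s a s'| ≤ rmax := by
    intro a
    calc |∑ s', P s a s' * r s a s'| ≤ ∑ s', |P s a s' * r s a s'| :=
          Finset.abs_sum_le_sum_abs _ _
      _ ≤ ∑ s', P s a s' * rmax := by
          apply Finset.sum_le_sum
          intro s' _
          rw [abs_mul, abs_of_nonneg ((hP s a).1 s')]
          exact mul_le_mul_of_nonneg_left (hr s a s') ((hP s a).1 s')
      _ = rmax := by rw [← Finset.sum_mul, (hP s a).2, one_mul]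
  calc |∑ a, π s a * ∑ s', P s a s' * r s a s'|
      ≤ ∑ a, |π s a * ∑ s', P s a s' * r s a s'| := Finset.abs_sum_le_sum_abs _ _
    _ ≤ ∑ a, π s a * rmax := by
        apply Finset.sum_le_sum
        intro a _
        rw [abs_mul, abs_of_nonneg ((hπ s).1 a)]
        exact mul_le_mul_of_nonneg_left (hain a) ((hπ s).1 a)
    _ = rmax := by rw [← Finset.sum_mul, (hπ s).2, one_mul]

lemma abs_expReward_le (P : S → A → S → ℝ) (π : S → A → ℝ) (r : S → A → S → ℝ)
    (rmax : ℝ) (μ : S → ℝ)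
    (hP : IsKernel P) (hπ : IsPolicy π) (hr : ∀ s a s', |r s a s'| ≤ rmax)
    (hμ : IsDist μ) :
    |expReward P π r μ| ≤ rmax := by
  calc |expReward P π r μ| ≤ ∑ s, |μ s * ∑ a, π s a * ∑ s', P s a s' * r s a s'| :=
        Finset.abs_sum_le_sum_abs _ _
    _ ≤ ∑ s, μ s * rmax := by
        apply Finset.sum_le_sum
        intro s _
        rw [abs_mul, abs_of_nonneg (hμ.1 s)]
        exact mul_le_mul_of_nonneg_left (abs_g_le P π r rmax hP hπ hr s) (hμ.1 s)
    _ = rmax := by rw [← Finset.sum_mul, hμ.2, one_mul]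

lemma expReward_diff (P P' : S → A → S → ℝ) (π : S → A → ℝ) (r : S → A → S → ℝ)
    (rmax δ₁ : ℝ)
    (hP : IsKernel P) (hP' : IsKernel P') (hπ : IsPolicy π)
    (hr : ∀ s a s', |r s a s'| ≤ rmax)
    (hδ : ∀ s a, (1 / 2) * ∑ s', |P' s a s' - P s a s'| ≤ δ₁)
    (hrmax : 0 ≤ rmax) (μ μ' : S → ℝ) (hμ : IsDist μ) :
    |expReward P' π r μ' - expReward P π r μ| ≤
      rmax * (∑ s, |μ' s - μ s|) + 2 * rmax * δ₁ := by
  set g := fun s => ∑ a, π s a * ∑ s', P s a s' * r s a s' with hgdef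
  set g' := fun s => ∑ a, π s a * ∑ s', P' s a s' * r s a s' with hg'def
  have hgd : ∀ s, |g' s - g s| ≤ 2 * rmax * δ₁ := by
    intro s
    have h1 : g' s - g s = ∑ a, π s a * ∑ s', (P' s a s' - P s a s') * r s a s' := by
      rw [hgdef, hg'def]
      simp only
      rw [← Finset.sum_sub_distrib]
      exact Finset.sum_congr rfl fun a _ => by
        rw [← mul_sub, ← Finset.sum_sub_distrib]
        congr 1
        exact Finset.sum_congr rfl fun s' _ => by ring
    have hinner : ∀ a, |∑ s', (P' s a s' - P s a s') * r s a s'| ≤ 2 * rmax * δ₁ := by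
      intro a
      calc |∑ s', (P' s a s' - P s a s') * r s a s'|
          ≤ ∑ s', |(P' s a s' - P s a s') * r s a s'| := Finset.abs_sum_le_sum_abs _ _
        _ ≤ ∑ s', |P' s a s' - P s a s'| * rmax := by
            apply Finset.sum_le_sum
            intro s' _
            rw [abs_mul]
            exact mul_le_mul_of_nonneg_left (hr s a s') (abs_nonneg _)
        _ = (∑ s', |P' s a s' - P s a s'|) * rmax := by rw [Finset.sum_mul]
        _ ≤ (2 * δ₁) * rmax := by
            apply mul_le_mul_of_nonneg_right _ hrmax
            linarith [hδ s a]
        _ = 2 * rmax * δ₁ := by ring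
    rw [h1]
    calc |∑ a, π s a * ∑ s', (P' s a s' - P s a s') * r s a s'|
        ≤ ∑ a, |π s a * ∑ s', (P' s a s' - P s a s') * r s a s'| :=
          Finset.abs_sum_le_sum_abs _ _
      _ ≤ ∑ a, π s a * (2 * rmax * δ₁) := by
          apply Finset.sum_le_sum
          intro a _
          rw [abs_mul, abs_of_nonneg ((hπ s).1 a)]
          exact mul_le_mul_of_nonneg_left (hinner a) ((hπ s).1 a)
      _ = 2 * rmax * δ₁ := by rw [← Finset.sum_mul, (hπ s).2, one_mul]
  have hdec : expReward P' π r μ' - expReward P π r μ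
      = ∑ s, ((μ' s - μ s) * g' s + μ s * (g' s - g s)) := by
    rw [expReward, expReward, ← Finset.sum_sub_distrib]
    exact Finset.sum_congr rfl fun s _ => by simp only [hgdef, hg'def]; ring
  rw [hdec]
  calc |∑ s, ((μ' s - μ s) * g' s + μ s * (g' s - g s))|
      ≤ ∑ s, |(μ' s - μ s) * g' s + μ s * (g' s - g s)| := Finset.abs_sum_le_sum_abs _ _
    _ ≤ ∑ s, (|μ' s - μ s| * rmax + μ s * (2 * rmax * δ₁)) := by
        apply Finset.sum_le_sum
        intro s _
        refine le_trans (abs_add_le _ _) (add_le_add ?_ ?_)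
        · rw [abs_mul]
          exact mul_le_mul_of_nonneg_left (abs_g_le P' π r rmax hP' hπ hr s) (abs_nonneg _)
        · rw [abs_mul, abs_of_nonneg (hμ.1 s)]
          exact mul_le_mul_of_nonneg_left (hgd s) (hμ.1 s)
    _ = rmax * (∑ s, |μ' s - μ s|) + 2 * rmax * δ₁ := by
        rw [Finset.sum_add_distrib, ← Finset.sum_mul, ← Finset.sum_mul, hμ.2, one_mul,
          mul_comm]

end aux2

/-- value difference bound between two kernels for a state appearing
at time `t`. -/
theorem value_diff_kernels [Fintype S] [Fintype A] [DecidableEq S]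
    (P P' : S → A → S → ℝ) (π : S → A → ℝ) (r : S → A → S → ℝ) (γ : ℝ)
    (rmax δ₁ : ℝ)
    (hP : IsKernel P) (hP' : IsKernel P') (hπ : IsPolicy π)
    (hγ0 : 0 ≤ γ) (hγ1 : γ < 1)
    (hr : ∀ s a s', |r s a s'| ≤ rmax)
    (hδ : ∀ s a, (1 / 2) * ∑ s', |P' s a s' - P s a s'| ≤ δ₁) :
    ∀ (t : ℕ) (s : S),
      |Vval P' π r γ s - Vval P π r γ s| ≤
        min (2 * rmax * δ₁ * ((t : ℝ) * γ * (1 - γ) + 1) / (1 - γ) ^ 2)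
          (2 * rmax / (1 - γ)) := by
  intro t s
  rcases isEmpty_or_nonempty A with hA | hA
  · exfalso
    have h := (hπ s).2
    rw [Finset.univ_eq_empty, Finset.sum_empty] at h
    exact one_ne_zero h.symm
  obtain ⟨a₀⟩ := hA
  have hrmax : 0 ≤ rmax := le_trans (abs_nonneg _) (hr s a₀ s)
  have hδ₁ : 0 ≤ δ₁ := le_trans (by positivity) (hδ s a₀)
  have h1γ : 0 < 1 - γ := by linarith
  set ρ : S → ℝ := fun s' => if s' = s then 1 else 0 with hρdef
  have hρ : IsDist ρ := by
    constructor
    · intro s'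
      by_cases h : s' = s <;> simp [hρdef, h]
    · simp [hρdef]
  have hγn : ‖γ‖ < 1 := by rwa [Real.norm_eq_abs, abs_of_nonneg hγ0]
  -- summability of the value series for any kernel
  have hsumQ : ∀ (Q : S → A → S → ℝ), IsKernel Q →
      Summable (fun n : ℕ => γ ^ n * expReward Q π r (marginal Q π ρ n)) := by
    intro Q hQ
    apply Summable.of_norm_bounded (g := fun n : ℕ => rmax * γ ^ n)
      ((summable_geometric_of_lt_one hγ0 hγ1).mul_left rmax)
    intro n
    rw [Real.norm_eq_abs, abs_mul, abs_of_nonneg (pow_nonneg hγ0 n)]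
    calc γ ^ n * |expReward Q π r (marginal Q π ρ n)|
        ≤ γ ^ n * rmax := mul_le_mul_of_nonneg_left
          (abs_expReward_le Q π r rmax _ hQ hπ hr (marginal_isDist Q π ρ hQ hπ hρ n))
          (pow_nonneg hγ0 n)
      _ = rmax * γ ^ n := mul_comm _ _
  -- crude bound on each value
  have hVb : ∀ (Q : S → A → S → ℝ), IsKernel Q →
      |Vval Q π r γ s| ≤ rmax * (1 - γ)⁻¹ := by
    intro Q hQ
    rw [Vval, Jret, ← Real.norm_eq_abs]
    refine tsum_of_norm_bounded ((hasSum_geometric_of_lt_one hγ0 hγ1).mul_left rmax) ?_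
    intro n
    rw [Real.norm_eq_abs, abs_mul, abs_of_nonneg (pow_nonneg hγ0 n)]
    calc γ ^ n * |expReward Q π r (marginal Q π ρ n)|
        ≤ γ ^ n * rmax := mul_le_mul_of_nonneg_left
          (abs_expReward_le Q π r rmax _ hQ hπ hr (marginal_isDist Q π ρ hQ hπ hρ n))
          (pow_nonneg hγ0 n)
      _ = rmax * γ ^ n := mul_comm _ _
  -- second component of the min
  have hcrude : |Vval P' π r γ s - Vval P π r γ s| ≤ 2 * rmax / (1 - γ) := by
    calc |Vval P' π r γ s - Vval P π r γ s|
        ≤ |Vval P' π r γ s| + |Vval P π r γ s| := abs_sub _ _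
      _ ≤ rmax * (1 - γ)⁻¹ + rmax * (1 - γ)⁻¹ := add_le_add (hVb P' hP') (hVb P hP)
      _ = 2 * rmax / (1 - γ) := by rw [div_eq_mul_inv]; ring
  -- series of (n+1) γ^n
  have hs1 : Summable (fun n : ℕ => (n : ℝ) * γ ^ n) := by
    have := summable_pow_mul_geometric_of_norm_lt_one 1 hγn (R := ℝ)
    simpa using this
  have hs2 : Summable (fun n : ℕ => γ ^ n) := summable_geometric_of_lt_one hγ0 hγ1
  have hsg : Summable (fun n : ℕ => ((n : ℝ) + 1) * γ ^ n) := by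
    have h := hs1.add hs2
    refine h.congr fun n => by ring
  have htv : ∑' n : ℕ, ((n : ℝ) + 1) * γ ^ n = 1 / (1 - γ) ^ 2 := by
    have h1 : ∑' n : ℕ, (n : ℝ) * γ ^ n = γ / (1 - γ) ^ 2 :=
      tsum_coe_mul_geometric_of_norm_lt_one hγn
    have h2 : ∑' n : ℕ, γ ^ n = (1 - γ)⁻¹ := tsum_geometric_of_lt_one hγ0 hγ1
    calc ∑' n : ℕ, ((n : ℝ) + 1) * γ ^ n
        = ∑' n : ℕ, ((n : ℝ) * γ ^ n + γ ^ n) := tsum_congr fun n => by ring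
      _ = (∑' n : ℕ, (n : ℝ) * γ ^ n) + ∑' n : ℕ, γ ^ n := Summable.tsum_add hs1 hs2
      _ = γ / (1 - γ) ^ 2 + (1 - γ)⁻¹ := by rw [h1, h2]
      _ = 1 / (1 - γ) ^ 2 := by field_simp; ring
  -- first component of the min
  have hdiff : Vval P' π r γ s - Vval P π r γ s
      = ∑' n : ℕ, γ ^ n * (expReward P' π r (marginal P' π ρ n)
          - expReward P π r (marginal P π ρ n)) := by
    rw [Vval, Vval, Jret, Jret, ← Summable.tsum_sub (hsumQ P' hP') (hsumQ P hP)]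
    exact tsum_congr fun n => by ring
  have hkey : |Vval P' π r γ s - Vval P π r γ s| ≤ 2 * rmax * δ₁ * (1 / (1 - γ) ^ 2) := by
    rw [hdiff]
    have hbound : ∀ n : ℕ, ‖γ ^ n * (expReward P' π r (marginal P' π ρ n)
        - expReward P π r (marginal P π ρ n))‖ ≤ 2 * rmax * δ₁ * (((n : ℝ) + 1) * γ ^ n) := by
      intro n
      have hEd := expReward_diff P P' π r rmax δ₁ hP hP' hπ hr hδ hrmax
        (marginal P π ρ n) (marginal P' π ρ n) (marginal_isDist P π ρ hP hπ hρ n)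
      have htvn := tv_marginal P P' π ρ δ₁ hP hP' hπ hρ hδ n
      have hEd2 : |expReward P' π r (marginal P' π ρ n)
          - expReward P π r (marginal P π ρ n)| ≤ 2 * rmax * δ₁ * ((n : ℝ) + 1) := by
        have h3 : rmax * (∑ s, |marginal P' π ρ n s - marginal P π ρ n s|)
            ≤ rmax * (2 * (n : ℝ) * δ₁) := mul_le_mul_of_nonneg_left htvn hrmax
        have h4 : rmax * (2 * (n : ℝ) * δ₁) + 2 * rmax * δ₁
            = 2 * rmax * δ₁ * ((n : ℝ) + 1) := by ring
        linarith
      rw [Real.norm_eq_abs, abs_mul, abs_of_nonneg (pow_nonneg hγ0 n)]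
      calc γ ^ n * |expReward P' π r (marginal P' π ρ n)
            - expReward P π r (marginal P π ρ n)|
          ≤ γ ^ n * (2 * rmax * δ₁ * ((n : ℝ) + 1)) :=
            mul_le_mul_of_nonneg_left hEd2 (pow_nonneg hγ0 n)
        _ = 2 * rmax * δ₁ * (((n : ℝ) + 1) * γ ^ n) := by ring
    have hHS : HasSum (fun n : ℕ => 2 * rmax * δ₁ * (((n : ℝ) + 1) * γ ^ n))
        (2 * rmax * δ₁ * (1 / (1 - γ) ^ 2)) := by
      have := hsg.hasSum.mul_left (2 * rmax * δ₁)
      rwa [htv] at this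
    rw [← Real.norm_eq_abs]
    exact tsum_of_norm_bounded hHS hbound
  rw [le_min_iff]
  refine ⟨?_, hcrude⟩
  calc |Vval P' π r γ s - Vval P π r γ s|
      ≤ 2 * rmax * δ₁ * (1 / (1 - γ) ^ 2) := hkey
    _ ≤ 2 * rmax * δ₁ * (((t : ℝ) * γ * (1 - γ) + 1) / (1 - γ) ^ 2) := by
        apply mul_le_mul_of_nonneg_left _ (by positivity)
        apply div_le_div_of_nonneg_right ?_ (by positivity)
        have : 0 ≤ (t : ℝ) * γ * (1 - γ) := by positivity
        linarith
    _ = 2 * rmax * δ₁ * ((t : ℝ) * γ * (1 - γ) + 1) / (1 - γ) ^ 2 := by ring
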